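/- Let {αₙ} and {βₙ} be sequences of positive reals, and {cₙ}, {dₙ} sequences of complex numbers with ∑|cₙ| < ∞ and ∑|dₙ| < ∞. Define f_N(t) = ∑_{n=1}^N cₙ e^{i αₙ t} and g_N(t) = ∑_{n=1}^N dₙ e^{i βₙ t}. Then for every s, t ∈ ℝ the limit lim_{N→∞} ∫_s^t f_N(r) g_N'(r) dr exists. -/

import Mathlib

open Complex Filter intervalIntegral

theorem trig_series_pointwise_convergence
    (α β : ℕ → ℝ) (hα : ∀ n, 0 < α n) (hβ : ∀ n, 0 < β n)
    (c d : ℕ → ℂ) (hc : Summable fun n => ‖c n‖) (hd : Summable fun n => ‖d n‖)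
    (s t : ℝ) :
    ∃ L : ℂ, Tendsto (fun N : ℕ =>
      ∫ r in s..t,
        (∑ n ∈ Finset.range N, c n * Complex.exp (Complex.I * (α n) * r)) *
        (∑ n ∈ Finset.range N, Complex.I * (β n) * d n * Complex.exp (Complex.I * (β n) * r)))
      atTop (nhds L) := by
  set F : ℕ × ℕ → ℂ := fun p =>
    c p.1 * (Complex.I * (β p.2) * d p.2) *
      ((Complex.exp (Complex.I * ((α p.1 : ℂ) + (β p.2 : ℂ)) * t) -
        Complex.exp (Complex.I * ((α p.1 : ℂ) + (β p.2 : ℂ)) * s)) /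
        (Complex.I * ((α p.1 : ℂ) + (β p.2 : ℂ)))) with hF
  have hne : ∀ n m : ℕ, (Complex.I * ((α n : ℂ) + (β m : ℂ))) ≠ 0 := by
    intro n m
    have h : (0:ℝ) < α n + β m := add_pos (hα n) (hβ m)
    apply mul_ne_zero Complex.I_ne_zero
    rw [show ((α n : ℂ) + (β m : ℂ)) = ((α n + β m : ℝ) : ℂ) by push_cast; ring]
    exact_mod_cast h.ne'
  -- Step 1: the integral equals the square double sum of F
  have hint : ∀ N : ℕ,
      (∫ r in s..t,
        (∑ n ∈ Finset.range N, c n * Complex.exp (Complex.I * (α n) * r)) *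
        (∑ n ∈ Finset.range N, Complex.I * (β n) * d n * Complex.exp (Complex.I * (β n) * r)))
      = ∑ p ∈ Finset.range N ×ˢ Finset.range N, F p := by
    intro N
    have hrw : ∀ r : ℝ,
        (∑ n ∈ Finset.range N, c n * Complex.exp (Complex.I * (α n) * r)) *
        (∑ n ∈ Finset.range N, Complex.I * (β n) * d n * Complex.exp (Complex.I * (β n) * r))
        = ∑ p ∈ Finset.range N ×ˢ Finset.range N,
            c p.1 * (Complex.I * (β p.2) * d p.2) *
              Complex.exp (Complex.I * ((α p.1 : ℂ) + (β p.2 : ℂ)) * r) := by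
      intro r
      rw [Finset.sum_mul_sum, Finset.sum_product]
      refine Finset.sum_congr rfl fun n _ => Finset.sum_congr rfl fun m _ => ?_
      rw [mul_add, add_mul, Complex.exp_add]
      ring
    rw [intervalIntegral.integral_congr (fun r _ => hrw r)]
    rw [intervalIntegral.integral_finset_sum]
    · apply Finset.sum_congr rfl
      intro p _
      rw [intervalIntegral.integral_const_mul, integral_exp_mul_complex (hne p.1 p.2)]
    · intro p _
      apply Continuous.intervalIntegrable
      continuity
  -- Step 2: F is summable
  have hFsum : Summable F := by
    have hcd : Summable (fun p : ℕ × ℕ => 2 * (‖c p.1‖ * ‖d p.2‖)) :=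
      ((hc.mul_of_nonneg hd (fun n => norm_nonneg _) (fun n => norm_nonneg _))).mul_left 2
    apply Summable.of_norm_bounded hcd
    intro p
    have h1 : ‖Complex.exp (Complex.I * ((α p.1 : ℂ) + (β p.2 : ℂ)) * t) -
        Complex.exp (Complex.I * ((α p.1 : ℂ) + (β p.2 : ℂ)) * s)‖ ≤ 2 := by
      refine (norm_sub_le _ _).trans ?_
      have e1 : ∀ r : ℝ, ‖Complex.exp (Complex.I * ((α p.1 : ℂ) + (β p.2 : ℂ)) * r)‖ = 1 := by
        intro r
        rw [Complex.norm_exp]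
        have hre : (Complex.I * ((α p.1 : ℂ) + (β p.2 : ℂ)) * r).re = 0 := by
          simp [Complex.mul_re, Complex.mul_im]
        rw [hre, Real.exp_zero]
      rw [e1 t, e1 s]; norm_num
    have h2 : ‖(Complex.I * ((α p.1 : ℂ) + (β p.2 : ℂ)))‖ = (α p.1 + β p.2 : ℝ) := by
      rw [norm_mul, Complex.norm_I, one_mul]
      rw [show ((α p.1 : ℂ) + (β p.2 : ℂ)) = ((α p.1 + β p.2 : ℝ) : ℂ) by push_cast; ring]
      rw [Complex.norm_real, Real.norm_of_nonneg (add_pos (hα p.1) (hβ p.2)).le]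
    have hpos : (0:ℝ) < α p.1 + β p.2 := add_pos (hα p.1) (hβ p.2)
    calc ‖F p‖ = ‖c p.1‖ * ((β p.2) * ‖d p.2‖) *
          (‖Complex.exp (Complex.I * ((α p.1 : ℂ) + (β p.2 : ℂ)) * t) -
            Complex.exp (Complex.I * ((α p.1 : ℂ) + (β p.2 : ℂ)) * s)‖ / (α p.1 + β p.2)) := by
          simp only [hF, norm_mul, norm_div, h2, Complex.norm_I]
          rw [show ‖((β p.2 : ℂ))‖ = (β p.2 : ℝ) from by
            rw [Complex.norm_real, Real.norm_of_nonneg (hβ p.2).le]]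
          ring
      _ ≤ ‖c p.1‖ * ((β p.2) * ‖d p.2‖) * (2 / (α p.1 + β p.2)) := by
          apply mul_le_mul_of_nonneg_left
          · exact div_le_div_of_nonneg_right h1 hpos.le
          · exact mul_nonneg (norm_nonneg _) (mul_nonneg (hβ p.2).le (norm_nonneg _))
      _ ≤ 2 * (‖c p.1‖ * ‖d p.2‖) := by
          rw [div_eq_mul_inv]
          have hb : β p.2 * (α p.1 + β p.2)⁻¹ ≤ 1 := by
            rw [← div_eq_mul_inv, div_le_one hpos]
            nlinarith [hα p.1]
          calc ‖c p.1‖ * ((β p.2) * ‖d p.2‖) * (2 * (α p.1 + β p.2)⁻¹)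
              = 2 * (‖c p.1‖ * ‖d p.2‖) * (β p.2 * (α p.1 + β p.2)⁻¹) := by ring
            _ ≤ 2 * (‖c p.1‖ * ‖d p.2‖) * 1 := by
                apply mul_le_mul_of_nonneg_left hb; positivity
            _ = 2 * (‖c p.1‖ * ‖d p.2‖) := by ring
  -- Step 3: square partial sums converge to the tsum
  refine ⟨∑' p, F p, ?_⟩
  simp only [hint]
  have hsq : Tendsto (fun N : ℕ => Finset.range N ×ˢ Finset.range N) atTop atTop := by
    apply tendsto_atTop_finset_of_monotone
    · intro a b hab
      exact Finset.product_subset_product (Finset.range_subset_range.mpr hab)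
        (Finset.range_subset_range.mpr hab)
    · intro p
      exact ⟨max p.1 p.2 + 1, Finset.mem_product.mpr
        ⟨Finset.mem_range.mpr (by omega), Finset.mem_range.mpr (by omega)⟩⟩
  exact hFsum.hasSum.comp hsq
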